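/- Let n, p be natural numbers, Q an n×n real diagonal matrix with strictly positive diagonal entries, P an n×n real symmetric positive definite matrix, A_b an n×n real matrix, B an n×p real matrix with Q·P·B = B, σ > 0, and let 𝓛₁, 𝓛₂ be symmetric p×p real matrices with 𝓛₁ − 𝓛₂ negative semidefinite. If Q·P·(A_b − B·𝓛₁·Bᵀ) + (A_b − B·𝓛₁·Bᵀ)ᵀ·P·Q + σ·B·Bᵀ is negative semidefinite, then Q·P·(A_b − B·𝓛₂·Bᵀ) + (A_b − B·𝓛₂·Bᵀ)ᵀ·P·Q + σ·B·Bᵀ is also negative semidefinite. (A cluster with the same buses but a different line topology whose Laplacian dominates the original one in the positive-semidefinite order inherits the verified output strict equilibrium-independent passivity.) -/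
import Mathlib


open Matrix

/-- Laplacian comparison (Proposition 6): a cluster with the same buses but a
different line topology whose Laplacian 𝓛₂ dominates 𝓛₁ in the positive
semidefinite order inherits the verified reduced-order OS-EIP LMI. -/
theorem cluster_topology_comparison
    (n p : ℕ) (d : Fin n → ℝ) (hd : ∀ i, 0 < d i)
    (Q : Matrix (Fin n) (Fin n) ℝ) (hQ : Q = Matrix.diagonal d)
    (P : Matrix (Fin n) (Fin n) ℝ) (hP : P.PosDef)
    (Ab : Matrix (Fin n) (Fin n) ℝ) (B : Matrix (Fin n) (Fin p) ℝ)
    (hQPB : Q * P * B = B) (σ : ℝ) (hσ : 0 < σ)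
    (L₁ L₂ : Matrix (Fin p) (Fin p) ℝ)
    (hL₁ : L₁.IsSymm) (hL₂ : L₂.IsSymm)
    (hdom : ∀ x : Fin p → ℝ, x ⬝ᵥ (L₁ - L₂).mulVec x ≤ 0)
    (hLMI₁ : ∀ x : Fin n → ℝ,
      x ⬝ᵥ (Q * P * (Ab - B * L₁ * Bᵀ) + (Ab - B * L₁ * Bᵀ)ᵀ * P * Q
              + σ • (B * Bᵀ)).mulVec x ≤ 0) :
    ∀ x : Fin n → ℝ,
      x ⬝ᵥ (Q * P * (Ab - B * L₂ * Bᵀ) + (Ab - B * L₂ * Bᵀ)ᵀ * P * Q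
              + σ • (B * Bᵀ)).mulVec x ≤ 0 := by
  intro x
  have hQsymm : Qᵀ = Q := by rw [hQ, Matrix.diagonal_transpose]
  have hPsymm : Pᵀ = P := hP.1.eq
  have hBPQ : Bᵀ * P * Q = Bᵀ := by
    have := congrArg Matrix.transpose hQPB
    simpa [Matrix.transpose_mul, hQsymm, hPsymm, Matrix.mul_assoc] using this
  set D := L₁ - L₂ with hD
  have hDsymm : Dᵀ = D := by
    simp [hD, Matrix.transpose_sub, hL₁.eq, hL₂.eq]
  have key : Q * P * (Ab - B * L₂ * Bᵀ) + (Ab - B * L₂ * Bᵀ)ᵀ * P * Q + σ • (B * Bᵀ)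
      = (Q * P * (Ab - B * L₁ * Bᵀ) + (Ab - B * L₁ * Bᵀ)ᵀ * P * Q + σ • (B * Bᵀ))
        + (B * D * Bᵀ + B * D * Bᵀ) := by
    have h1 : Q * P * (Ab - B * L₂ * Bᵀ)
        = Q * P * (Ab - B * L₁ * Bᵀ) + B * D * Bᵀ := by
      have e1 : Q * P * (B * D * Bᵀ) = B * D * Bᵀ := by
        calc Q * P * (B * D * Bᵀ) = (Q * P * B) * D * Bᵀ := by
              simp [Matrix.mul_assoc]
          _ = B * D * Bᵀ := by rw [hQPB]
      calc Q * P * (Ab - B * L₂ * Bᵀ)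
          = Q * P * (Ab - B * L₁ * Bᵀ) + Q * P * (B * D * Bᵀ) := by
            simp only [hD, Matrix.mul_sub, Matrix.sub_mul]; abel
        _ = Q * P * (Ab - B * L₁ * Bᵀ) + B * D * Bᵀ := by rw [e1]
    have h2 : (Ab - B * L₂ * Bᵀ)ᵀ * P * Q
        = (Ab - B * L₁ * Bᵀ)ᵀ * P * Q + B * D * Bᵀ := by
      have e2 : (B * D * Bᵀ)ᵀ * P * Q = B * D * Bᵀ := by
        calc (B * D * Bᵀ)ᵀ * P * Q = B * D * (Bᵀ * P * Q) := by
              simp [Matrix.transpose_mul, hDsymm, Matrix.mul_assoc]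
          _ = B * D * Bᵀ := by rw [hBPQ]
      calc (Ab - B * L₂ * Bᵀ)ᵀ * P * Q
          = (Ab - B * L₁ * Bᵀ)ᵀ * P * Q + (B * D * Bᵀ)ᵀ * P * Q := by
            simp only [hD, Matrix.mul_sub, Matrix.sub_mul, Matrix.transpose_sub]; abel
        _ = (Ab - B * L₁ * Bᵀ)ᵀ * P * Q + B * D * Bᵀ := by rw [e2]
    rw [h1, h2]; abel
  rw [key]
  have hq : x ⬝ᵥ (B * D * Bᵀ).mulVec x ≤ 0 := by
    have e3 : x ⬝ᵥ (B * D * Bᵀ).mulVec x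
        = (Bᵀ.mulVec x) ⬝ᵥ D.mulVec (Bᵀ.mulVec x) := by
      rw [Matrix.mul_assoc, ← Matrix.mulVec_mulVec, ← Matrix.mulVec_mulVec,
        Matrix.dotProduct_mulVec, Matrix.mulVec_transpose]
    rw [e3]
    exact hdom _
  have h := hLMI₁ x
  simp only [Matrix.add_mulVec, dotProduct_add] at h ⊢
  linarith
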